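/- Let K be a positive integer, n > 0 and α real numbers with n + α > 0, let g₁,…,g_K : ℝ → ℝ and m₁,…,m_K be real numbers. Suppose z : ℝ → ℝ is differentiable on an open interval I, with z(x) > 0 and z'(x) > 0 for all x ∈ I, and z satisfies (z'(x))^n = Σ_{k=1}^K g_k(x)·z(x)^{m_k} for all x ∈ I (real powers). Define w(x) = z(x)^{(n+α)/n}. Then w is differentiable on I with w'(x) > 0, and w satisfies (w'(x))^n = Σ_{k=1}^K ((n+α)/n)^n · g_k(x) · w(x)^{n(m_k+α)/(n+α)} for all x ∈ I. -/

import Mathlib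

/-- If `z` solves the generalized Abel ODE `(z')^n = ∑ g_k z^{m_k}` on an open
interval, with `z > 0` and `z' > 0`, then `w = z^{(n+α)/n}` is differentiable with positive
derivative and solves `(w')^n = ∑ ((n+α)/n)^n g_k w^{n(m_k+α)/(n+α)}`. -/
theorem abel_transformation (K : ℕ) (hK : 0 < K) (n α : ℝ) (hn : 0 < n) (hna : 0 < n + α)
    (g : Fin K → ℝ → ℝ) (m : Fin K → ℝ) (a b : ℝ)
    (z z' : ℝ → ℝ)
    (hz : ∀ x ∈ Set.Ioo a b, HasDerivAt z (z' x) x)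
    (hzpos : ∀ x ∈ Set.Ioo a b, 0 < z x)
    (hz'pos : ∀ x ∈ Set.Ioo a b, 0 < z' x)
    (hode : ∀ x ∈ Set.Ioo a b, (z' x) ^ n = ∑ k, g k x * z x ^ (m k))
    (w : ℝ → ℝ) (hw : w = fun x => z x ^ ((n + α) / n)) :
    ∀ x ∈ Set.Ioo a b, ∃ w' : ℝ, HasDerivAt w w' x ∧ 0 < w' ∧
      w' ^ n = ∑ k, ((n + α) / n) ^ n * g k x * w x ^ (n * (m k + α) / (n + α)) := by
  intro x hx
  set c : ℝ := (n + α) / n with hc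
  have hcpos : 0 < c := div_pos hna hn
  have hzx := hzpos x hx
  have hz'x := hz'pos x hx
  refine ⟨c * z x ^ (c - 1) * z' x, ?_, ?_, ?_⟩
  · rw [hw]
    have := (hz x hx).rpow_const (p := c) (Or.inl hzx.ne')
    convert this using 1; ring
  · positivity
  · have hcne : c ≠ 0 := hcpos.ne'
    have h1 : (c * z x ^ (c - 1) * z' x) ^ n
        = c ^ n * (z x ^ (c - 1)) ^ n * (z' x) ^ n := by
      rw [Real.mul_rpow (by positivity) hz'x.le, Real.mul_rpow hcpos.le (by positivity)]
    have h2 : (z x ^ (c - 1)) ^ n = z x ^ α := by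
      rw [← Real.rpow_mul hzx.le]
      congr 1
      field_simp [hc]
      rw [hc, sub_mul, div_mul_cancel₀ _ hn.ne']; ring
    have h3 : ∀ k : Fin K, w x ^ (n * (m k + α) / (n + α)) = z x ^ (m k + α) := by
      intro k
      rw [hw]
      simp only
      rw [← Real.rpow_mul hzx.le]
      congr 1
      rw [hc]
      field_simp
    rw [h1, h2, hode x hx, Finset.mul_sum]
    refine Finset.sum_congr rfl fun k _ => ?_
    rw [h3 k, Real.rpow_add hzx]
    ring
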